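/- Let n ≥ 6 be divisible by 6, Δ > 0, T > 0, and set β = 1/T and P_min(β) = (1/8)[3 + 2·tanh^{n/2}(βΔ/2) + 3·tanh^n(βΔ/2)] (the minimum triangle-game winning probability of the thermal cluster state). Then P_min(β) > 7/8 if and only if tanh^{n/2}(Δ/(2T)) > (√13 − 1)/3, which holds if and only if T < T_c := Δ / (2 · artanh( ((√13 − 1)/3)^{2/n} )). (Equivalently, for x ∈ [0,1), (3 + 2x + 3x²)/8 > 7/8 if and only if x > (√13 − 1)/3.) -/

import Mathlib

noncomputable section

/-- The inverse hyperbolic tangent on `(−1,1)`: `artanh x = (1/2) log((1+x)/(1−x))`. -/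
def Real.artanhLog (x : ℝ) : ℝ := Real.log ((1 + x) / (1 - x)) / 2

lemma tanh_eq' (x : ℝ) : Real.tanh x = (Real.exp (2*x) - 1)/(Real.exp (2*x) + 1) := by
  rw [Real.tanh_eq_sinh_div_cosh, Real.sinh_eq, Real.cosh_eq, two_mul, Real.exp_add,
    Real.exp_neg]
  have h := Real.exp_pos x
  have h2 : 0 < Real.exp x * Real.exp x + 1 := by positivity
  field_simp

lemma tanh_nonneg' {x : ℝ} (h : 0 ≤ x) : 0 ≤ Real.tanh x := by
  rw [tanh_eq']
  have : (1:ℝ) ≤ Real.exp (2*x) := by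
    rw [← Real.exp_zero]; exact Real.exp_le_exp.2 (by linarith)
  have := Real.exp_pos (2*x)
  apply div_nonneg <;> linarith

lemma tanh_lt_one' (x : ℝ) : Real.tanh x < 1 := by
  rw [tanh_eq']
  have := Real.exp_pos (2*x)
  rw [div_lt_one (by linarith)]; linarith

lemma lt_tanh_iff {y t : ℝ} (hy : -1 < y) (hy' : y < 1) :
    y < Real.tanh t ↔ Real.artanhLog y < t := by
  rw [tanh_eq', Real.artanhLog]
  have hE := Real.exp_pos (2*t)
  have h1 : (0:ℝ) < 1 + y := by linarith
  have h2 : (0:ℝ) < 1 - y := by linarith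
  have hpos : 0 < (1 + y) / (1 - y) := div_pos h1 h2
  constructor
  · intro h
    rw [lt_div_iff₀ (by linarith)] at h
    have hlt : (1 + y) / (1 - y) < Real.exp (2 * t) := by rw [div_lt_iff₀ h2]; nlinarith
    have := (Real.log_lt_iff_lt_exp hpos).2 hlt
    linarith
  · intro h
    have h' : Real.log ((1 + y) / (1 - y)) < 2 * t := by linarith
    have hlt := (Real.log_lt_iff_lt_exp hpos).1 h'
    rw [div_lt_iff₀ h2] at hlt
    rw [lt_div_iff₀ (by linarith)]
    nlinarith

/-- Critical temperature of the thermal cluster state: with `β = 1/T` and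
`P_min(β) = (1/8)[3 + 2 tanh^{n/2}(βΔ/2) + 3 tanh^n(βΔ/2)]`, one has `P_min(β) > 7/8` iff
`tanh^{n/2}(Δ/(2T)) > (√13 − 1)/3`, which holds iff
`T < T_c = Δ/(2 artanh(((√13 − 1)/3) ^ (2/n)))`. Equivalently, for `x ∈ [0,1)`,
`(3 + 2x + 3x²)/8 > 7/8` iff `x > (√13 − 1)/3`. -/
theorem thermal_cluster_critical_temperature (n : ℕ) (hn6 : 6 ≤ n) (hn : 6 ∣ n)
    (Δ T β : ℝ) (hΔ : 0 < Δ) (hT : 0 < T) (hβ : β = 1 / T) :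
    ((3 + 2 * Real.tanh (β * Δ / 2) ^ (n / 2) + 3 * Real.tanh (β * Δ / 2) ^ n) / 8 > 7 / 8
      ↔ Real.tanh (Δ / (2 * T)) ^ (n / 2) > (Real.sqrt 13 - 1) / 3) ∧
    (Real.tanh (Δ / (2 * T)) ^ (n / 2) > (Real.sqrt 13 - 1) / 3
      ↔ T < Δ / (2 * Real.artanhLog (((Real.sqrt 13 - 1) / 3) ^ ((2 : ℝ) / (n : ℝ))))) ∧
    (∀ x : ℝ, 0 ≤ x → x < 1 →
      ((3 + 2 * x + 3 * x ^ 2) / 8 > 7 / 8 ↔ x > (Real.sqrt 13 - 1) / 3)) := by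
  -- basic numeric facts about √13 and c
  have hs2 : Real.sqrt 13 ^ 2 = 13 := Real.sq_sqrt (by norm_num)
  have hs3 : (3:ℝ) < Real.sqrt 13 := by
    rw [show (3:ℝ) = Real.sqrt 9 by rw [show (9:ℝ) = 3^2 by norm_num, Real.sqrt_sq]; norm_num]
    exact Real.sqrt_lt_sqrt (by norm_num) (by norm_num)
  have hs4 : Real.sqrt 13 < 4 := by
    rw [show (4:ℝ) = Real.sqrt 16 by rw [show (16:ℝ) = 4^2 by norm_num, Real.sqrt_sq]; norm_num]
    exact Real.sqrt_lt_sqrt (by norm_num) (by norm_num)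
  set c : ℝ := (Real.sqrt 13 - 1) / 3 with hc
  have hc0 : 0 < c := by rw [hc]; linarith
  have hc1 : c < 1 := by rw [hc]; linarith
  -- part 3
  have part3 : ∀ x : ℝ, 0 ≤ x → x < 1 →
      ((3 + 2 * x + 3 * x ^ 2) / 8 > 7 / 8 ↔ x > c) := by
    intro x hx0 hx1
    constructor
    · intro h
      by_contra hle
      push_neg at hle
      nlinarith [sq_nonneg (x - c), sq_nonneg (x + c)]
    · intro h
      nlinarith [sq_nonneg (x - c)]
  -- setup m, t
  obtain ⟨k, hk⟩ := hn
  have hm : n / 2 = 3 * k := by omega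
  have hn2 : n = 2 * (n / 2) := by omega
  have hmpos : 0 < n / 2 := by omega
  set m := n / 2 with hmdef
  set t : ℝ := Δ / (2 * T) with ht
  have htpos : 0 < t := by positivity
  have harg : β * Δ / 2 = t := by
    rw [hβ, ht]; field_simp
  have hx0 : 0 ≤ Real.tanh t := tanh_nonneg' htpos.le
  have hx1 : Real.tanh t < 1 := tanh_lt_one' t
  have hX0 : 0 ≤ Real.tanh t ^ m := pow_nonneg hx0 m
  have hX1 : Real.tanh t ^ m < 1 := pow_lt_one₀ hx0 hx1 (by omega)
  refine ⟨?_, ?_, part3⟩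
  · rw [harg]
    have hpow : Real.tanh t ^ n = (Real.tanh t ^ m) ^ 2 := by
      have hnm : n = m * 2 := by omega
      rw [← pow_mul, ← hnm]
    rw [hpow]
    exact part3 _ hX0 hX1
  · -- part 2
    set d : ℝ := c ^ ((2 : ℝ) / (n : ℝ)) with hd
    have hnne : (n:ℝ) ≠ 0 := by positivity
    have hd0 : 0 < d := Real.rpow_pos_of_pos hc0 _
    have hd1 : d < 1 := Real.rpow_lt_one hc0.le hc1 (by positivity)
    have hdm : d ^ m = c := by
      rw [hd, ← Real.rpow_natCast (c ^ ((2:ℝ)/(n:ℝ))) m, ← Real.rpow_mul hc0.le]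
      rw [show (2:ℝ)/(n:ℝ) * (m:ℕ) = 1 by
        field_simp
        rw [hn2]; push_cast; ring]
      exact Real.rpow_one c
    have hA : 0 < Real.artanhLog d := by
      rw [Real.artanhLog]
      have : (1:ℝ) < (1 + d) / (1 - d) := by
        rw [lt_div_iff₀ (by linarith)]; linarith
      have := Real.log_pos this
      linarith
    constructor
    · intro h
      have hxd : d < Real.tanh t := by
        by_contra hle
        push_neg at hle
        have : Real.tanh t ^ m ≤ d ^ m := pow_le_pow_left₀ hx0 hle m
        rw [hdm] at this; linarith
      have := (lt_tanh_iff (by linarith) hd1).1 hxd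
      rw [ht] at this
      rw [lt_div_iff₀ (by linarith)]
      rw [lt_div_iff₀ (by positivity)] at this
      nlinarith
    · intro h
      have h2 : Real.artanhLog d < t := by
        rw [ht, lt_div_iff₀ (by positivity)]
        rw [lt_div_iff₀ (by linarith)] at h
        nlinarith
      have hxd : d < Real.tanh t := (lt_tanh_iff (by linarith) hd1).2 h2
      calc c = d ^ m := hdm.symm
        _ < Real.tanh t ^ m := pow_lt_pow_left₀ hxd hd0.le (by omega)
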